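/- arXiv:2404.10950 — 2 statements merged into one kernel-verified Lean document; each statement's English description precedes it below -/
import Mathlib

section
/- Let α ∈ (1,∞), let p_X be a strictly positive probability distribution on 𝒳 and p_{Y|X} a channel with p_{Y|X}(y|x) > 0 for all x, y. (1) For any strictly positive probability distribution q̃_{X,Y} on 𝒳×𝒴, the map r_{X|Y} ↦ F̃_α^{LP}(q̃_{X,Y}, r_{X|Y}) over reverse channels is maximized by the posterior r*_{X|Y}(x|y) := q̃_{X,Y}(x,y) / Σ_{x'} q̃_{X,Y}(x',y). (2) For any strictly positive reverse channel r_{X|Y}, the map q̃_{X,Y} ↦ F̃_α^{LP}(q̃_{X,Y}, r_{X|Y}) over strictly positive probability distributions q̃_{X,Y} is maximized by q̃*_{X,Y}(x,y) := q̂_X(x) q̂_{Y|X}(y|x), where q̂_{Y|X}(y|x) := p_{Y|X}(y|x) r_{X|Y}(x|y)^{1−1/α} / Σ_{y'} p_{Y|X}(y'|x) r_{X|Y}(x|y')^{1−1/α} and q̂_X(x) := p_X(x)^{α/(2α−1)} ( Σ_y p_{Y|X}(y|x) r_{X|Y}(x|y)^{1−1/α} )^{α/(2α−1)} / Σ_{x'}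 p_X(x')^{α/(2α−1)} ( Σ_y p_{Y|X}(y|x') r_{X|Y}(x'|y)^{1−1/α} )^{α/(2α−1)}. -/
/-- A probability mass function on a finite type. -/
def IsPMF {Z : Type*} [Fintype Z] (q : Z → ℝ) : Prop :=
  (∀ z, 0 ≤ q z) ∧ ∑ z, q z = 1

/-- Kullback--Leibler divergence (natural log). -/
noncomputable def klD {Z : Type*} [Fintype Z] (p q : Z → ℝ) : ℝ :=
  ∑ z, p z * Real.log (p z / q z)

/-- Extended-real logarithm: `elog 0 = ⊥` (i.e. `log 0 = −∞`). -/
noncomputable def elog (t : ℝ) : EReal :=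
  if t = 0 then ⊥ else ((Real.log t : ℝ) : EReal)

/-- `F̃_α^{LP}(q̃_{X,Y}, r_{X|Y}) = (α/(1−α)) D(q̃_{X,Y} ‖ q̃_X p_{Y|X})
  + Σ_{x,y} q̃_{X,Y}(x,y) log(r(x|y)/q̃_X(x)) + (α/(1−α)) D(q̃_X ‖ p_X)`,
valued in `ℝ ∪ {−∞}` (as `EReal`). -/
noncomputable def FtildeLP {X Y : Type*} [Fintype X] [Fintype Y]
    (α : ℝ) (pX : X → ℝ) (pYX : X → Y → ℝ) (qt : X × Y → ℝ) (r : Y → X → ℝ) : EReal :=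
  (((α / (1 - α)) * klD qt (fun z : X × Y => (∑ y, qt (z.1, y)) * pYX z.1 z.2) : ℝ) : EReal)
  + ∑ z : X × Y, ((qt z : ℝ) : EReal) * elog (r z.2 z.1 / ∑ y, qt (z.1, y))
  + (((α / (1 - α)) * klD (fun x => ∑ y, qt (x, y)) pX : ℝ) : EReal)

lemma coe_fsum {ι : Type*} (s : Finset ι) (f : ι → ℝ) :
    ((∑ i ∈ s, f i : ℝ) : EReal) = ∑ i ∈ s, ((f i : ℝ) : EReal) := by
  induction s using Finset.cons_induction with
  | empty => simp
  | cons a s ha ih => simp [Finset.sum_cons, EReal.coe_add, ih]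

lemma gibbs {Z : Type*} [Fintype Z] (a c : Z → ℝ) (ha : ∀ z, 0 ≤ a z) (hc : ∀ z, 0 < c z)
    (hs : ∑ z, c z ≤ ∑ z, a z) : 0 ≤ ∑ z, a z * Real.log (a z / c z) := by
  have h1 : ∀ z, -(a z * Real.log (a z / c z)) ≤ c z - a z := by
    intro z
    rcases eq_or_lt_of_le (ha z) with h | h
    · simpa [← h] using (hc z).le
    · have hlog : Real.log (c z / a z) ≤ c z / a z - 1 :=
        Real.log_le_sub_one_of_pos (div_pos (hc z) h)
      have e : Real.log (c z / a z) = -Real.log (a z / c z) := by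
        rw [← Real.log_inv]
        congr 1
        field_simp
      rw [e] at hlog
      have h2 := mul_le_mul_of_nonneg_left hlog h.le
      calc -(a z * Real.log (a z / c z)) = a z * -Real.log (a z / c z) := by ring
        _ ≤ a z * (c z / a z - 1) := h2
        _ = c z - a z := by field_simp
  have h2 : ∑ z, -(a z * Real.log (a z / c z)) ≤ ∑ z, (c z - a z) :=
    Finset.sum_le_sum (fun z _ => h1 z)
  rw [Finset.sum_neg_distrib, Finset.sum_sub_distrib] at h2
  linarith

lemma sum_marg {X Y : Type*} [Fintype X] [Fintype Y] (qt : X × Y → ℝ) (f : X → ℝ) :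
    ∑ z : X × Y, qt z * f z.1 = ∑ x, (∑ y, qt (x, y)) * f x := by
  rw [Fintype.sum_prod_type]
  exact Finset.sum_congr rfl fun x _ => by simp [Finset.sum_mul]

lemma sum_prod_mul {X Y : Type*} [Fintype X] [Fintype Y] (g : X → ℝ) (m : X → Y → ℝ)
    (hm : ∀ x, ∑ y, m x y = 1) : ∑ z : X × Y, g z.1 * m z.1 z.2 = ∑ x, g x := by
  rw [Fintype.sum_prod_type]
  refine Finset.sum_congr rfl fun x _ => ?_
  show ∑ y : Y, g x * m x y = g x
  rw [← Finset.mul_sum, hm x, mul_one]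

lemma bridge {X Y : Type*} [Fintype X] [Fintype Y] [Nonempty Y]
    (α : ℝ) (pX : X → ℝ) (pYX : X → Y → ℝ) (qt : X × Y → ℝ) (r : Y → X → ℝ)
    (hqtpos : ∀ z, 0 < qt z) (hrpos : ∀ y x, 0 < r y x) :
    FtildeLP α pX pYX qt r
      = (((α / (1 - α)) * klD qt (fun z : X × Y => (∑ y, qt (z.1, y)) * pYX z.1 z.2)
          + ∑ z : X × Y, qt z * Real.log (r z.2 z.1 / ∑ y, qt (z.1, y))
          + (α / (1 - α)) * klD (fun x => ∑ y, qt (x, y)) pX : ℝ) : EReal) := by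
  have hqtXpos : ∀ x, 0 < ∑ y, qt (x, y) :=
    fun x => Finset.sum_pos (fun y _ => hqtpos _) Finset.univ_nonempty
  unfold FtildeLP
  rw [EReal.coe_add, EReal.coe_add]
  congr 1
  congr 1
  rw [coe_fsum]
  refine Finset.sum_congr rfl fun z _ => ?_
  rw [EReal.coe_mul]
  congr 1
  rw [elog, if_neg (ne_of_gt (div_pos (hrpos z.2 z.1) (hqtXpos z.1)))]

lemma identity {X Y : Type*} [Fintype X] [Fintype Y] [Nonempty X] [Nonempty Y]
    (α : ℝ) (hα : 1 < α)
    (pX : X → ℝ) (hpXpos : ∀ x, 0 < pX x)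
    (pYX : X → Y → ℝ) (hpYXpos : ∀ x y, 0 < pYX x y)
    (r : Y → X → ℝ) (hrpos : ∀ y x, 0 < r y x)
    (qt : X × Y → ℝ) (hqtsum : ∑ z : X × Y, qt z = 1) (hqtpos : ∀ z, 0 < qt z) :
    (α / (1 - α)) * klD qt (fun z : X × Y => (∑ y, qt (z.1, y)) * pYX z.1 z.2)
      + ∑ z : X × Y, qt z * Real.log (r z.2 z.1 / ∑ y, qt (z.1, y))
      + (α / (1 - α)) * klD (fun x => ∑ y, qt (x, y)) pX
    = (α / (1 - α)) * ∑ z : X × Y, qt z * Real.log (qt z /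
          ((∑ y, qt (z.1, y)) *
            (pYX z.1 z.2 * r z.2 z.1 ^ (1 - 1 / α) /
              ∑ y', pYX z.1 y' * r y' z.1 ^ (1 - 1 / α))))
      + (α / (1 - α) - 1) * ∑ x, (∑ y, qt (x, y)) * Real.log ((∑ y, qt (x, y)) /
          (pX x ^ (α / (2 * α - 1)) *
              (∑ y, pYX x y * r y x ^ (1 - 1 / α)) ^ (α / (2 * α - 1)) /
            ∑ x', pX x' ^ (α / (2 * α - 1)) *
              (∑ y, pYX x' y * r y x' ^ (1 - 1 / α)) ^ (α / (2 * α - 1))))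
      + (1 - α / (1 - α)) * Real.log (∑ x', pX x' ^ (α / (2 * α - 1)) *
          (∑ y, pYX x' y * r y x' ^ (1 - 1 / α)) ^ (α / (2 * α - 1))) := by
  have hα0 : α ≠ 0 := by positivity
  have h1a : (1 : ℝ) - α ≠ 0 := by intro h; nlinarith
  have h2a : 2 * α - 1 ≠ 0 := by intro h; nlinarith
  have hqtXpos : ∀ x, 0 < ∑ y, qt (x, y) :=
    fun x => Finset.sum_pos (fun y _ => hqtpos _) Finset.univ_nonempty
  have hApos : ∀ x, 0 < ∑ y, pYX x y * r y x ^ (1 - 1 / α) :=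
    fun x => Finset.sum_pos
      (fun y _ => mul_pos (hpYXpos x y) (Real.rpow_pos_of_pos (hrpos y x) _))
      Finset.univ_nonempty
  have hBpos : 0 < ∑ x', pX x' ^ (α / (2 * α - 1)) *
      (∑ y, pYX x' y * r y x' ^ (1 - 1 / α)) ^ (α / (2 * α - 1)) :=
    Finset.sum_pos (fun x _ => mul_pos (Real.rpow_pos_of_pos (hpXpos x) _)
      (Real.rpow_pos_of_pos (hApos x) _)) Finset.univ_nonempty
  have hβs : (α / (1 - α)) * (1 - 1 / α) = -1 := by field_simp; ring
  have hβγ : (α / (1 - α) - 1) * (α / (2 * α - 1)) = α / (1 - α) := by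
    rw [div_sub_one h1a, div_mul_div_comm, div_eq_div_iff (mul_ne_zero h1a h2a) h1a]; ring
  have hsumX : ∑ x, ∑ y, qt (x, y) = 1 := by
    rw [← Fintype.sum_prod_type]; exact hqtsum
  have marg4 : ∑ z : X × Y, qt z * Real.log (∑ y, qt (z.1, y))
      = ∑ x, (∑ y, qt (x, y)) * Real.log (∑ y, qt (x, y)) :=
    sum_marg qt (fun x => Real.log (∑ y, qt (x, y)))
  have marg6 : ∑ z : X × Y, qt z * Real.log (∑ y', pYX z.1 y' * r y' z.1 ^ (1 - 1 / α))
      = ∑ x, (∑ y, qt (x, y)) * Real.log (∑ y', pYX x y' * r y' x ^ (1 - 1 / α)) :=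
    sum_marg qt (fun x => Real.log (∑ y', pYX x y' * r y' x ^ (1 - 1 / α)))
  have f1 : klD qt (fun z : X × Y => (∑ y, qt (z.1, y)) * pYX z.1 z.2)
      = (∑ z : X × Y, qt z * Real.log (qt z))
        - (∑ x, (∑ y, qt (x, y)) * Real.log (∑ y, qt (x, y)))
        - ∑ z : X × Y, qt z * Real.log (pYX z.1 z.2) := by
    rw [klD, ← marg4, ← Finset.sum_sub_distrib, ← Finset.sum_sub_distrib]
    refine Finset.sum_congr rfl fun z _ => ?_
    rw [Real.log_div (ne_of_gt (hqtpos z))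
        (ne_of_gt (mul_pos (hqtXpos z.1) (hpYXpos z.1 z.2))),
      Real.log_mul (ne_of_gt (hqtXpos z.1)) (ne_of_gt (hpYXpos z.1 z.2))]
    ring
  have f3 : ∑ z : X × Y, qt z * Real.log (r z.2 z.1 / ∑ y, qt (z.1, y))
      = (∑ z : X × Y, qt z * Real.log (r z.2 z.1))
        - ∑ x, (∑ y, qt (x, y)) * Real.log (∑ y, qt (x, y)) := by
    rw [← marg4, ← Finset.sum_sub_distrib]
    refine Finset.sum_congr rfl fun z _ => ?_
    rw [Real.log_div (ne_of_gt (hrpos z.2 z.1)) (ne_of_gt (hqtXpos z.1))]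
    ring
  have f4 : klD (fun x => ∑ y, qt (x, y)) pX
      = (∑ x, (∑ y, qt (x, y)) * Real.log (∑ y, qt (x, y)))
        - ∑ x, (∑ y, qt (x, y)) * Real.log (pX x) := by
    rw [klD, ← Finset.sum_sub_distrib]
    refine Finset.sum_congr rfl fun x _ => ?_
    rw [Real.log_div (ne_of_gt (hqtXpos x)) (ne_of_gt (hpXpos x))]
    ring
  have f5 : ∑ z : X × Y, qt z * Real.log (qt z /
        ((∑ y, qt (z.1, y)) *
          (pYX z.1 z.2 * r z.2 z.1 ^ (1 - 1 / α) /
            ∑ y', pYX z.1 y' * r y' z.1 ^ (1 - 1 / α))))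
      = (∑ z : X × Y, qt z * Real.log (qt z))
        - (∑ x, (∑ y, qt (x, y)) * Real.log (∑ y, qt (x, y)))
        - (∑ z : X × Y, qt z * Real.log (pYX z.1 z.2))
        - (1 - 1 / α) * (∑ z : X × Y, qt z * Real.log (r z.2 z.1))
        + ∑ x, (∑ y, qt (x, y)) * Real.log (∑ y', pYX x y' * r y' x ^ (1 - 1 / α)) := by
    rw [← marg4, ← marg6, Finset.mul_sum, ← Finset.sum_sub_distrib,
      ← Finset.sum_sub_distrib, ← Finset.sum_sub_distrib, ← Finset.sum_add_distrib]
    refine Finset.sum_congr rfl fun z _ => ?_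
    have hrp : (0 : ℝ) < r z.2 z.1 ^ (1 - 1 / α) := Real.rpow_pos_of_pos (hrpos z.2 z.1) _
    rw [Real.log_div (ne_of_gt (hqtpos z)) (ne_of_gt (mul_pos (hqtXpos z.1)
        (div_pos (mul_pos (hpYXpos z.1 z.2) hrp) (hApos z.1)))),
      Real.log_mul (ne_of_gt (hqtXpos z.1)) (ne_of_gt (div_pos (mul_pos (hpYXpos z.1 z.2) hrp)
        (hApos z.1))),
      Real.log_div (ne_of_gt (mul_pos (hpYXpos z.1 z.2) hrp)) (ne_of_gt (hApos z.1)),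
      Real.log_mul (ne_of_gt (hpYXpos z.1 z.2)) (ne_of_gt hrp),
      Real.log_rpow (hrpos z.2 z.1)]
    ring
  have f6 : ∑ x, (∑ y, qt (x, y)) * Real.log ((∑ y, qt (x, y)) /
        (pX x ^ (α / (2 * α - 1)) *
            (∑ y, pYX x y * r y x ^ (1 - 1 / α)) ^ (α / (2 * α - 1)) /
          ∑ x', pX x' ^ (α / (2 * α - 1)) *
            (∑ y, pYX x' y * r y x' ^ (1 - 1 / α)) ^ (α / (2 * α - 1))))
      = (∑ x, (∑ y, qt (x, y)) * Real.log (∑ y, qt (x, y)))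
        - (α / (2 * α - 1)) * (∑ x, (∑ y, qt (x, y)) * Real.log (pX x))
        - (α / (2 * α - 1)) *
            (∑ x, (∑ y, qt (x, y)) * Real.log (∑ y', pYX x y' * r y' x ^ (1 - 1 / α)))
        + Real.log (∑ x', pX x' ^ (α / (2 * α - 1)) *
            (∑ y, pYX x' y * r y x' ^ (1 - 1 / α)) ^ (α / (2 * α - 1))) := by
    have hlogB : Real.log (∑ x', pX x' ^ (α / (2 * α - 1)) *
        (∑ y, pYX x' y * r y x' ^ (1 - 1 / α)) ^ (α / (2 * α - 1)))
        = ∑ x, (∑ y, qt (x, y)) * Real.log (∑ x', pX x' ^ (α / (2 * α - 1)) *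
            (∑ y, pYX x' y * r y x' ^ (1 - 1 / α)) ^ (α / (2 * α - 1))) := by
      rw [← Finset.sum_mul, hsumX, one_mul]
    rw [hlogB, Finset.mul_sum, Finset.mul_sum, ← Finset.sum_sub_distrib,
      ← Finset.sum_sub_distrib, ← Finset.sum_add_distrib]
    refine Finset.sum_congr rfl fun x _ => ?_
    have hpxp : (0 : ℝ) < pX x ^ (α / (2 * α - 1)) := Real.rpow_pos_of_pos (hpXpos x) _
    have hAxp : (0 : ℝ) < (∑ y, pYX x y * r y x ^ (1 - 1 / α)) ^ (α / (2 * α - 1)) :=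
      Real.rpow_pos_of_pos (hApos x) _
    rw [Real.log_div (ne_of_gt (hqtXpos x))
        (ne_of_gt (div_pos (mul_pos hpxp hAxp) hBpos)),
      Real.log_div (ne_of_gt (mul_pos hpxp hAxp)) (ne_of_gt hBpos),
      Real.log_mul (ne_of_gt hpxp) (ne_of_gt hAxp),
      Real.log_rpow (hpXpos x), Real.log_rpow (hApos x)]
    ring
  rw [f1, f3, f4, f5, f6]
  linear_combination (∑ z : X × Y, qt z * Real.log (r z.2 z.1)) * hβs
    + ((∑ x, (∑ y, qt (x, y)) * Real.log (pX x))
      + ∑ x, (∑ y, qt (x, y)) * Real.log (∑ y', pYX x y' * r y' x ^ (1 - 1 / α))) * hβγ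

lemma identity_le {X Y : Type*} [Fintype X] [Fintype Y] [Nonempty X] [Nonempty Y]
    (α : ℝ) (hα : 1 < α)
    (pX : X → ℝ) (hpXpos : ∀ x, 0 < pX x)
    (pYX : X → Y → ℝ) (hpYXpos : ∀ x y, 0 < pYX x y)
    (r : Y → X → ℝ) (hrpos : ∀ y x, 0 < r y x)
    (qt : X × Y → ℝ) (hqtsum : ∑ z : X × Y, qt z = 1) (hqtpos : ∀ z, 0 < qt z) :
    (α / (1 - α)) * klD qt (fun z : X × Y => (∑ y, qt (z.1, y)) * pYX z.1 z.2)
      + ∑ z : X × Y, qt z * Real.log (r z.2 z.1 / ∑ y, qt (z.1, y))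
      + (α / (1 - α)) * klD (fun x => ∑ y, qt (x, y)) pX
    ≤ (1 - α / (1 - α)) * Real.log (∑ x', pX x' ^ (α / (2 * α - 1)) *
          (∑ y, pYX x' y * r y x' ^ (1 - 1 / α)) ^ (α / (2 * α - 1))) := by
  have hqtXpos : ∀ x, 0 < ∑ y, qt (x, y) :=
    fun x => Finset.sum_pos (fun y _ => hqtpos _) Finset.univ_nonempty
  have hApos : ∀ x, 0 < ∑ y, pYX x y * r y x ^ (1 - 1 / α) :=
    fun x => Finset.sum_pos
      (fun y _ => mul_pos (hpYXpos x y) (Real.rpow_pos_of_pos (hrpos y x) _))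
      Finset.univ_nonempty
  have hBpos : 0 < ∑ x', pX x' ^ (α / (2 * α - 1)) *
      (∑ y, pYX x' y * r y x' ^ (1 - 1 / α)) ^ (α / (2 * α - 1)) :=
    Finset.sum_pos (fun x _ => mul_pos (Real.rpow_pos_of_pos (hpXpos x) _)
      (Real.rpow_pos_of_pos (hApos x) _)) Finset.univ_nonempty
  have hβneg : α / (1 - α) < 0 :=
    div_neg_of_pos_of_neg (by linarith) (by linarith)
  have hβ1neg : α / (1 - α) - 1 < 0 := by linarith
  have hsumX : ∑ x, ∑ y, qt (x, y) = 1 := by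
    rw [← Fintype.sum_prod_type]; exact hqtsum
  rw [identity α hα pX hpXpos pYX hpYXpos r hrpos qt hqtsum hqtpos]
  have h2 : 0 ≤ ∑ z : X × Y, qt z * Real.log (qt z /
      ((∑ y, qt (z.1, y)) *
        (pYX z.1 z.2 * r z.2 z.1 ^ (1 - 1 / α) /
          ∑ y', pYX z.1 y' * r y' z.1 ^ (1 - 1 / α)))) := by
    refine gibbs _ _ (fun z => (hqtpos z).le)
      (fun z => mul_pos (hqtXpos z.1) (div_pos
        (mul_pos (hpYXpos z.1 z.2) (Real.rpow_pos_of_pos (hrpos z.2 z.1) _)) (hApos z.1)))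
      (le_of_eq ?_)
    rw [hqtsum]
    refine sum_prod_mul (fun x => ∑ y, qt (x, y))
      (fun x y => pYX x y * r y x ^ (1 - 1 / α) / ∑ y', pYX x y' * r y' x ^ (1 - 1 / α))
      (fun x => ?_) |>.trans hsumX
    rw [← Finset.sum_div, div_self (ne_of_gt (hApos x))]
  have h1 : 0 ≤ ∑ x, (∑ y, qt (x, y)) * Real.log ((∑ y, qt (x, y)) /
      (pX x ^ (α / (2 * α - 1)) *
          (∑ y, pYX x y * r y x ^ (1 - 1 / α)) ^ (α / (2 * α - 1)) /
        ∑ x', pX x' ^ (α / (2 * α - 1)) *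
          (∑ y, pYX x' y * r y x' ^ (1 - 1 / α)) ^ (α / (2 * α - 1)))) := by
    refine gibbs _ _ (fun x => (hqtXpos x).le)
      (fun x => div_pos (mul_pos (Real.rpow_pos_of_pos (hpXpos x) _)
        (Real.rpow_pos_of_pos (hApos x) _)) hBpos)
      (le_of_eq ?_)
    rw [hsumX, ← Finset.sum_div, div_self (ne_of_gt hBpos)]
  nlinarith [h1, h2, mul_nonneg h1 h2]

/-- Alternating-maximization updating formulae for `F̃_α^{LP}` when `α > 1`:
(1) for fixed strictly positive `q̃_{X,Y}`, the maximizing reverse channel is the posterior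
`r*(x|y) = q̃_{X,Y}(x,y)/Σ_{x'} q̃_{X,Y}(x',y)`; (2) for fixed strictly positive `r_{X|Y}`,
the maximizing strictly positive `q̃_{X,Y}` is the product `q̂_X q̂_{Y|X}` of the stated
tilted distributions. -/
theorem FtildeLP_max_updates {X Y : Type*} [Fintype X] [Fintype Y] [Nonempty X] [Nonempty Y]
    (α : ℝ) (hα : 1 < α)
    (pX : X → ℝ) (hpX : IsPMF pX) (hpXpos : ∀ x, 0 < pX x)
    (pYX : X → Y → ℝ) (hpYX : ∀ x, IsPMF (pYX x)) (hpYXpos : ∀ x y, 0 < pYX x y) :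
    (∀ qt : X × Y → ℝ, IsPMF qt → (∀ z, 0 < qt z) →
      ∀ r : Y → X → ℝ, (∀ y, IsPMF (r y)) →
        FtildeLP α pX pYX qt r ≤
        FtildeLP α pX pYX qt (fun y x => qt (x, y) / ∑ x', qt (x', y))) ∧
    (∀ r : Y → X → ℝ, (∀ y, IsPMF (r y)) → (∀ y x, 0 < r y x) →
      ∀ qt : X × Y → ℝ, IsPMF qt → (∀ z, 0 < qt z) →
        FtildeLP α pX pYX qt r ≤
        FtildeLP α pX pYX
          (fun z : X × Y =>
            (pX z.1 ^ (α / (2 * α - 1)) *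
                (∑ y, pYX z.1 y * r y z.1 ^ (1 - 1 / α)) ^ (α / (2 * α - 1)) /
              ∑ x', pX x' ^ (α / (2 * α - 1)) *
                (∑ y, pYX x' y * r y x' ^ (1 - 1 / α)) ^ (α / (2 * α - 1))) *
            (pYX z.1 z.2 * r z.2 z.1 ^ (1 - 1 / α) /
              ∑ y', pYX z.1 y' * r y' z.1 ^ (1 - 1 / α))) r) := by
  constructor
  · intro qt hqt hqtpos r hr
    classical
    have hqtXpos : ∀ x, 0 < ∑ y, qt (x, y) :=
      fun x => Finset.sum_pos (fun y _ => hqtpos _) Finset.univ_nonempty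
    have hqtYpos : ∀ y, 0 < ∑ x', qt (x', y) :=
      fun y => Finset.sum_pos (fun x _ => hqtpos _) Finset.univ_nonempty
    have hmid : (∑ z : X × Y, ((qt z : ℝ) : EReal) * elog (r z.2 z.1 / ∑ y, qt (z.1, y)))
        ≤ ∑ z : X × Y, ((qt z : ℝ) : EReal) *
            elog ((qt (z.1, z.2) / ∑ x', qt (x', z.2)) / ∑ y, qt (z.1, y)) := by
      by_cases hzero : ∀ z : X × Y, r z.2 z.1 ≠ 0
      · have hrpos : ∀ z : X × Y, 0 < r z.2 z.1 :=
          fun z => lt_of_le_of_ne ((hr z.2).1 z.1) (Ne.symm (hzero z))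
        have m1 : (∑ z : X × Y, ((qt z : ℝ) : EReal) * elog (r z.2 z.1 / ∑ y, qt (z.1, y)))
            = ((∑ z : X × Y, qt z * Real.log (r z.2 z.1 / ∑ y, qt (z.1, y)) : ℝ) : EReal) := by
          rw [coe_fsum]
          refine Finset.sum_congr rfl fun z _ => ?_
          rw [EReal.coe_mul]
          congr 1
          rw [elog, if_neg (ne_of_gt (div_pos (hrpos z) (hqtXpos z.1)))]
        have m2 : (∑ z : X × Y, ((qt z : ℝ) : EReal) *
              elog ((qt (z.1, z.2) / ∑ x', qt (x', z.2)) / ∑ y, qt (z.1, y)))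
            = ((∑ z : X × Y, qt z *
                Real.log ((qt (z.1, z.2) / ∑ x', qt (x', z.2)) / ∑ y, qt (z.1, y)) : ℝ) : EReal) := by
          rw [coe_fsum]
          refine Finset.sum_congr rfl fun z _ => ?_
          rw [EReal.coe_mul]
          congr 1
          rw [elog, if_neg (ne_of_gt (div_pos (div_pos (hqtpos (z.1, z.2)) (hqtYpos z.2))
            (hqtXpos z.1)))]
        rw [m1, m2]
        rw [EReal.coe_le_coe_iff]
        have key : 0 ≤ ∑ z : X × Y, qt z *
            Real.log (qt z / ((∑ x', qt (x', z.2)) * r z.2 z.1)) := by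
          refine gibbs _ _ (fun z => (hqtpos z).le)
            (fun z => mul_pos (hqtYpos z.2) (hrpos z)) (le_of_eq ?_)
          calc ∑ z : X × Y, (∑ x', qt (x', z.2)) * r z.2 z.1
              = ∑ y, ∑ x, (∑ x', qt (x', y)) * r y x :=
                Fintype.sum_prod_type_right _
            _ = ∑ y, (∑ x', qt (x', y)) * ∑ x, r y x := by
                simp [Finset.mul_sum]
            _ = ∑ y, ∑ x', qt (x', y) := by
                refine Finset.sum_congr rfl fun y _ => ?_
                rw [(hr y).2, mul_one]
            _ = ∑ z : X × Y, qt z := (Fintype.sum_prod_type_right _).symm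
        have pw : ∀ z : X × Y,
            Real.log ((qt (z.1, z.2) / ∑ x', qt (x', z.2)) / ∑ y, qt (z.1, y))
              - Real.log (r z.2 z.1 / ∑ y, qt (z.1, y))
            = Real.log (qt z / ((∑ x', qt (x', z.2)) * r z.2 z.1)) := by
          intro z
          rw [Real.log_div (ne_of_gt (div_pos (hqtpos (z.1, z.2)) (hqtYpos z.2)))
              (ne_of_gt (hqtXpos z.1)),
            Real.log_div (hzero z) (ne_of_gt (hqtXpos z.1)),
            Real.log_div (ne_of_gt (hqtpos (z.1, z.2))) (ne_of_gt (hqtYpos z.2)),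
            Real.log_div (ne_of_gt (hqtpos z)) (ne_of_gt (mul_pos (hqtYpos z.2) (hrpos z))),
            Real.log_mul (ne_of_gt (hqtYpos z.2)) (hzero z)]
          ring
        have expand : ∑ z : X × Y,
            (qt z * Real.log ((qt (z.1, z.2) / ∑ x', qt (x', z.2)) / ∑ y, qt (z.1, y))
              - qt z * Real.log (r z.2 z.1 / ∑ y, qt (z.1, y)))
            = ∑ z : X × Y, qt z * Real.log (qt z / ((∑ x', qt (x', z.2)) * r z.2 z.1)) :=
          Finset.sum_congr rfl fun z _ => by rw [← mul_sub, pw z]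
        rw [Finset.sum_sub_distrib] at expand
        linarith
      · push_neg at hzero
        obtain ⟨z0, hz0⟩ := hzero
        have hbot : (∑ z : X × Y, ((qt z : ℝ) : EReal) *
            elog (r z.2 z.1 / ∑ y, qt (z.1, y))) = ⊥ := by
          rw [← Finset.add_sum_erase _ _ (Finset.mem_univ z0)]
          have he : elog (r z0.2 z0.1 / ∑ y, qt (z0.1, y)) = ⊥ := by
            rw [hz0]
            simp [elog]
          rw [he, EReal.coe_mul_bot_of_pos (hqtpos z0), EReal.bot_add]
        rw [hbot]
        exact bot_le
    unfold FtildeLP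
    exact add_le_add (add_le_add le_rfl hmid) le_rfl
  · intro r hr hrpos qt hqt hqtpos
    have hApos : ∀ x, 0 < ∑ y, pYX x y * r y x ^ (1 - 1 / α) :=
      fun x => Finset.sum_pos
        (fun y _ => mul_pos (hpYXpos x y) (Real.rpow_pos_of_pos (hrpos y x) _))
        Finset.univ_nonempty
    have hBpos : 0 < ∑ x', pX x' ^ (α / (2 * α - 1)) *
        (∑ y, pYX x' y * r y x' ^ (1 - 1 / α)) ^ (α / (2 * α - 1)) :=
      Finset.sum_pos (fun x _ => mul_pos (Real.rpow_pos_of_pos (hpXpos x) _)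
        (Real.rpow_pos_of_pos (hApos x) _)) Finset.univ_nonempty
    set qs : X × Y → ℝ := (fun z : X × Y =>
        (pX z.1 ^ (α / (2 * α - 1)) *
            (∑ y, pYX z.1 y * r y z.1 ^ (1 - 1 / α)) ^ (α / (2 * α - 1)) /
          ∑ x', pX x' ^ (α / (2 * α - 1)) *
            (∑ y, pYX x' y * r y x' ^ (1 - 1 / α)) ^ (α / (2 * α - 1))) *
        (pYX z.1 z.2 * r z.2 z.1 ^ (1 - 1 / α) /
          ∑ y', pYX z.1 y' * r y' z.1 ^ (1 - 1 / α))) with hqsdef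
    have hqspos : ∀ z, 0 < qs z := by
      intro z
      simp only [hqsdef]
      exact mul_pos (div_pos (mul_pos (Real.rpow_pos_of_pos (hpXpos z.1) _)
          (Real.rpow_pos_of_pos (hApos z.1) _)) hBpos)
        (div_pos (mul_pos (hpYXpos z.1 z.2)
          (Real.rpow_pos_of_pos (hrpos z.2 z.1) _)) (hApos z.1))
    have hmargqs : ∀ x, (∑ y, qs (x, y)) = pX x ^ (α / (2 * α - 1)) *
        (∑ y, pYX x y * r y x ^ (1 - 1 / α)) ^ (α / (2 * α - 1)) /
          ∑ x', pX x' ^ (α / (2 * α - 1)) *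
            (∑ y, pYX x' y * r y x' ^ (1 - 1 / α)) ^ (α / (2 * α - 1)) := by
      intro x
      simp only [hqsdef]
      rw [← Finset.mul_sum, ← Finset.sum_div, div_self (ne_of_gt (hApos x)), mul_one]
    have hqssum : ∑ z : X × Y, qs z = 1 := by
      rw [Fintype.sum_prod_type]
      calc ∑ x, ∑ y, qs (x, y)
          = ∑ x, (pX x ^ (α / (2 * α - 1)) *
              (∑ y, pYX x y * r y x ^ (1 - 1 / α)) ^ (α / (2 * α - 1)) /
            ∑ x', pX x' ^ (α / (2 * α - 1)) *
              (∑ y, pYX x' y * r y x' ^ (1 - 1 / α)) ^ (α / (2 * α - 1))) :=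
            Finset.sum_congr rfl fun x _ => hmargqs x
        _ = 1 := by rw [← Finset.sum_div, div_self (ne_of_gt hBpos)]
    rw [bridge α pX pYX qt r hqtpos hrpos, bridge α pX pYX qs r hqspos hrpos,
      EReal.coe_le_coe_iff]
    refine le_trans (identity_le α hα pX hpXpos pYX hpYXpos r hrpos qt hqt.2 hqtpos)
      (le_of_eq ?_)
    rw [identity α hα pX hpXpos pYX hpYXpos r hrpos qs hqssum hqspos]
    have hz2 : ∀ z : X × Y, qs z / ((∑ y, qs (z.1, y)) *
        (pYX z.1 z.2 * r z.2 z.1 ^ (1 - 1 / α) /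
          ∑ y', pYX z.1 y' * r y' z.1 ^ (1 - 1 / α))) = 1 := by
      intro z
      rw [hmargqs z.1]
      simp only [hqsdef]
      exact div_self (ne_of_gt (mul_pos (div_pos (mul_pos
        (Real.rpow_pos_of_pos (hpXpos z.1) _) (Real.rpow_pos_of_pos (hApos z.1) _)) hBpos)
        (div_pos (mul_pos (hpYXpos z.1 z.2)
          (Real.rpow_pos_of_pos (hrpos z.2 z.1) _)) (hApos z.1))))
    have hz1 : ∀ x, (∑ y, qs (x, y)) / (pX x ^ (α / (2 * α - 1)) *
        (∑ y, pYX x y * r y x ^ (1 - 1 / α)) ^ (α / (2 * α - 1)) /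
          ∑ x', pX x' ^ (α / (2 * α - 1)) *
            (∑ y, pYX x' y * r y x' ^ (1 - 1 / α)) ^ (α / (2 * α - 1))) = 1 := by
      intro x
      rw [hmargqs x]
      exact div_self (ne_of_gt (div_pos (mul_pos (Real.rpow_pos_of_pos (hpXpos x) _)
        (Real.rpow_pos_of_pos (hApos x) _)) hBpos))
    simp only [hz2, hz1, Real.log_one, mul_zero, Finset.sum_const_zero, add_zero, zero_add]
end

section
/- Let α ∈ (1,∞) and let p_{Y|X} be a channel with p_{Y|X}(y|x) > 0 for all x, y. Consider F̃_α^{S3}(p_X, q̃_{X,Y}, r_{X|Y}) as a function of a strictly positive distribution p_X on 𝒳, a strictly positive joint distribution q̃_{X,Y} on 𝒳×𝒴, and a reverse channel r_{X|Y}. Then: (1) for fixed (p_X, q̃_{X,Y}), F̃_α^{S3} is maximized over reverse channels by r*_{X|Y}(x|y) := q̃_{X,Y}(x,y)/Σ_{x'} q̃_{X,Y}(x',y); (2) for fixed (q̃_{X,Y}, r_{X|Y}) with r_{X|Y} strictly positive, F̃_α^{S3} is maximized over strictly positive distributions p_X by p*_X(x) := Σ_y q̃_{X,Y}(x,y); (3)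 for fixed (p_X, r_{X|Y}) with r_{X|Y} strictly positive, F̃_α^{S3} is maximized over strictly positive joint distributions q̃_{X,Y} by q̃*_{X,Y}(x,y) := p_X(x)^{1/α} p_{Y|X}(y|x) r_{X|Y}(x|y)^{1−1/α} / Σ_{x',y'} p_X(x')^{1/α} p_{Y|X}(y'|x') r_{X|Y}(x'|y')^{1−1/α}. -/
/-- `F̃_α^{S3}(p_X, q̃_{X,Y}, r_{X|Y}) = (α/(1−α)) D(q̃_{X,Y} ‖ q̃_X p_{Y|X})
  + Σ_{x,y} q̃_{X,Y}(x,y) log(r(x|y)/q̃_X(x)) + (1/(1−α)) D(q̃_X ‖ p_X)`,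
valued in `ℝ ∪ {−∞}` (as `EReal`). -/
noncomputable def FtildeS3 {X Y : Type*} [Fintype X] [Fintype Y]
    (α : ℝ) (pYX : X → Y → ℝ) (pX : X → ℝ) (qt : X × Y → ℝ) (r : Y → X → ℝ) : EReal :=
  (((α / (1 - α)) * klD qt (fun z : X × Y => (∑ y, qt (z.1, y)) * pYX z.1 z.2) : ℝ) : EReal)
  + ∑ z : X × Y, ((qt z : ℝ) : EReal) * elog (r z.2 z.1 / ∑ y, qt (z.1, y))
  + (((1 / (1 - α)) * klD (fun x => ∑ y, qt (x, y)) pX : ℝ) : EReal)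

section Helpers
variable {Z : Type*} [Fintype Z]

/-- Gibbs' inequality. -/
lemma gibbs_ineq (p q : Z → ℝ) (hp : ∀ z, 0 ≤ p z) (hp1 : ∑ z, p z = 1)
    (hq : ∀ z, 0 < q z) (hq1 : ∑ z, q z ≤ 1) :
    0 ≤ ∑ z, p z * Real.log (p z / q z) := by
  have key : ∀ z, p z * Real.log (q z / p z) ≤ q z - p z := by
    intro z
    rcases eq_or_lt_of_le (hp z) with h | h
    · simp [← h, le_of_lt (hq z)]
    · have hlog := Real.log_le_sub_one_of_pos (div_pos (hq z) h)
      have h2 : p z * Real.log (q z / p z) ≤ p z * (q z / p z - 1) :=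
        mul_le_mul_of_nonneg_left hlog h.le
      have h3 : p z * (q z / p z - 1) = q z - p z := by field_simp
      linarith
  have hflip : ∀ z, p z * Real.log (p z / q z) = -(p z * Real.log (q z / p z)) := by
    intro z
    rw [show p z / q z = (q z / p z)⁻¹ from (inv_div _ _).symm, Real.log_inv]
    ring
  have hsum : ∑ z, p z * Real.log (q z / p z) ≤ ∑ z, (q z - p z) :=
    Finset.sum_le_sum (fun z _ => key z)
  have h2 : ∑ z, (q z - p z) ≤ 0 := by
    rw [Finset.sum_sub_distrib, hp1]; linarith
  have h3 : ∑ z, p z * Real.log (p z / q z) = -∑ z, p z * Real.log (q z / p z) := by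
    rw [← Finset.sum_neg_distrib]
    exact Finset.sum_congr rfl fun z _ => hflip z
  linarith

lemma klD_self (p : Z → ℝ) : klD p p = 0 := by
  unfold klD
  apply Finset.sum_eq_zero
  intro z _
  by_cases h : p z = 0
  · simp [h]
  · simp [div_self h]

lemma ereal_coe_sum {s : Finset Z} (f : Z → ℝ) :
    ((∑ z ∈ s, f z : ℝ) : EReal) = ∑ z ∈ s, ((f z : ℝ) : EReal) := by
  induction s using Finset.cons_induction with
  | empty => simp
  | cons a s ha ih => rw [Finset.sum_cons, Finset.sum_cons, EReal.coe_add, ih]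

end Helpers


section Main
variable {X Y : Type*} [Fintype X] [Fintype Y]

/-- Real-valued version of `FtildeS3`. -/
noncomputable def Freal (α : ℝ) (pYX : X → Y → ℝ) (pX : X → ℝ)
    (qt : X × Y → ℝ) (r : Y → X → ℝ) : ℝ :=
  (α / (1 - α)) * klD qt (fun z : X × Y => (∑ y, qt (z.1, y)) * pYX z.1 z.2)
  + ∑ z : X × Y, qt z * Real.log (r z.2 z.1 / ∑ y, qt (z.1, y))
  + (1 / (1 - α)) * klD (fun x => ∑ y, qt (x, y)) pX

lemma FtildeS3_eq_coe [Nonempty Y] (α : ℝ) (pYX : X → Y → ℝ) (pX : X → ℝ)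
    (qt : X × Y → ℝ) (r : Y → X → ℝ) (hqt : ∀ z, 0 < qt z) (hr : ∀ y x, 0 < r y x) :
    FtildeS3 α pYX pX qt r = ((Freal α pYX pX qt r : ℝ) : EReal) := by
  have hqX : ∀ x, 0 < ∑ y, qt (x, y) :=
    fun x => Finset.sum_pos (fun y _ => hqt _) Finset.univ_nonempty
  unfold FtildeS3 Freal
  rw [EReal.coe_add, EReal.coe_add, ereal_coe_sum]
  congr 2
  apply Finset.sum_congr rfl
  intro z _
  have he : elog (r z.2 z.1 / ∑ y, qt (z.1, y)) =
      ((Real.log (r z.2 z.1 / ∑ y, qt (z.1, y)) : ℝ) : EReal) := by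
    unfold elog; rw [if_neg (div_pos (hr _ _) (hqX _)).ne']
  rw [he, ← EReal.coe_mul]

lemma FtildeS3_eq_bot (α : ℝ) (pYX : X → Y → ℝ) (pX : X → ℝ)
    (qt : X × Y → ℝ) (r : Y → X → ℝ) (hqt : ∀ z, 0 < qt z)
    (z0 : X × Y) (h0 : r z0.2 z0.1 = 0) :
    FtildeS3 α pYX pX qt r = ⊥ := by
  classical
  have hterm : ((qt z0 : ℝ) : EReal) * elog (r z0.2 z0.1 / ∑ y, qt (z0.1, y)) = ⊥ := by
    have : elog (r z0.2 z0.1 / ∑ y, qt (z0.1, y)) = ⊥ := by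
      unfold elog; rw [h0, zero_div, if_pos rfl]
    rw [this]
    exact EReal.mul_bot_of_pos (by exact_mod_cast hqt z0)
  have hsum : (∑ z : X × Y, ((qt z : ℝ) : EReal) * elog (r z.2 z.1 / ∑ y, qt (z.1, y))) = ⊥ := by
    rw [← Finset.add_sum_erase _ _ (Finset.mem_univ z0), hterm, EReal.bot_add]
  unfold FtildeS3
  rw [hsum, EReal.add_bot, EReal.bot_add]

lemma part1_real [Nonempty X] [Nonempty Y] (α : ℝ) (pYX : X → Y → ℝ) (pX : X → ℝ)
    (qt : X × Y → ℝ) (r : Y → X → ℝ) (hqt : IsPMF qt) (hqtpos : ∀ z, 0 < qt z)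
    (hr : ∀ y, IsPMF (r y)) (hrpos : ∀ y x, 0 < r y x) :
    Freal α pYX pX qt r ≤ Freal α pYX pX qt (fun y x => qt (x, y) / ∑ x', qt (x', y)) := by
  have hqX : ∀ x, 0 < ∑ y, qt (x, y) :=
    fun x => Finset.sum_pos (fun y _ => hqtpos _) Finset.univ_nonempty
  have hqY : ∀ y, 0 < ∑ x', qt (x', y) :=
    fun y => Finset.sum_pos (fun x _ => hqtpos _) Finset.univ_nonempty
  unfold Freal
  apply add_le_add_left
  apply add_le_add_right
  -- middle sums: difference is a KL divergence
  have hsum1 : ∑ z : X × Y, (∑ x', qt (x', z.2)) * r z.2 z.1 = 1 := by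
    rw [Fintype.sum_prod_type_right]
    have : ∀ y, ∑ x, (∑ x', qt (x', y)) * r y x = ∑ x', qt (x', y) := by
      intro y
      rw [← Finset.mul_sum, (hr y).2, mul_one]
    rw [Finset.sum_congr rfl fun y _ => this y]
    rw [← Fintype.sum_prod_type_right]
    exact hqt.2
  have key : 0 ≤ ∑ z : X × Y, qt z * Real.log (qt z / ((∑ x', qt (x', z.2)) * r z.2 z.1)) :=
    gibbs_ineq _ _ (fun z => (hqtpos z).le) hqt.2
      (fun z => mul_pos (hqY _) (hrpos _ _)) (le_of_eq hsum1)
  have hdiff : ∑ z : X × Y, qt z * Real.log (qt (z.1, z.2) / (∑ x', qt (x', z.2)) / ∑ y, qt (z.1, y))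
      - ∑ z : X × Y, qt z * Real.log (r z.2 z.1 / ∑ y, qt (z.1, y))
      = ∑ z : X × Y, qt z * Real.log (qt z / ((∑ x', qt (x', z.2)) * r z.2 z.1)) := by
    rw [← Finset.sum_sub_distrib]
    apply Finset.sum_congr rfl
    intro z _
    have hA : (0:ℝ) < qt (z.1, z.2) / (∑ x', qt (x', z.2)) / ∑ y, qt (z.1, y) := by
      have : qt (z.1, z.2) = qt z := by rw [Prod.mk.eta]
      rw [this]
      exact div_pos (div_pos (hqtpos z) (hqY _)) (hqX _)
    have hB : (0:ℝ) < r z.2 z.1 / ∑ y, qt (z.1, y) := div_pos (hrpos _ _) (hqX _)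
    rw [← mul_sub, ← Real.log_div hA.ne' hB.ne']
    congr 2
    have hz : qt (z.1, z.2) = qt z := by rw [Prod.mk.eta]
    rw [hz, div_div_div_cancel_right₀ (hqX z.1).ne', div_div]
  have := hdiff ▸ key
  simpa using by linarith [this]

lemma part2_real [Nonempty X] [Nonempty Y] (α : ℝ) (hα : 1 < α)
    (pYX : X → Y → ℝ) (pX : X → ℝ)
    (qt : X × Y → ℝ) (r : Y → X → ℝ) (hqt : IsPMF qt) (hqtpos : ∀ z, 0 < qt z)
    (hpX : IsPMF pX) (hpXpos : ∀ x, 0 < pX x) :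
    Freal α pYX pX qt r ≤ Freal α pYX (fun x => ∑ y, qt (x, y)) qt r := by
  unfold Freal
  apply add_le_add_right
  rw [klD_self, mul_zero]
  have hmargsum : ∑ x, ∑ y, qt (x, y) = 1 := by
    rw [← Fintype.sum_prod_type]; exact hqt.2
  have hkl : 0 ≤ klD (fun x => ∑ y, qt (x, y)) pX :=
    gibbs_ineq _ _ (fun x => Finset.sum_nonneg fun y _ => (hqtpos _).le)
      hmargsum hpXpos (le_of_eq hpX.2)
  have hc : (1 : ℝ) / (1 - α) < 0 := div_neg_of_pos_of_neg one_pos (by linarith)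
  exact mul_nonpos_of_nonpos_of_nonneg hc.le hkl

lemma Freal_repr [Nonempty Y] (α : ℝ) (hα : 1 < α)
    (pYX : X → Y → ℝ) (pX : X → ℝ) (q : X × Y → ℝ) (r : Y → X → ℝ)
    (hpY : ∀ x y, 0 < pYX x y) (hpX : ∀ x, 0 < pX x)
    (hr : ∀ y x, 0 < r y x) (hq : ∀ z, 0 < q z) :
    Freal α pYX pX q r = (α / (1 - α)) *
      ∑ z : X × Y, q z * Real.log
        (q z / (pX z.1 ^ (1 / α) * pYX z.1 z.2 * r z.2 z.1 ^ (1 - 1 / α))) := by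
  have hα0 : α ≠ 0 := by linarith
  have h1α : (1 : ℝ) - α ≠ 0 := by linarith
  have hqX : ∀ x, 0 < ∑ y, q (x, y) :=
    fun x => Finset.sum_pos (fun y _ => hq _) Finset.univ_nonempty
  unfold Freal klD
  have h3 : ∑ x, (∑ y, q (x, y)) * Real.log ((∑ y, q (x, y)) / pX x)
      = ∑ z : X × Y, q z * Real.log ((∑ y, q (z.1, y)) / pX z.1) := by
    rw [Fintype.sum_prod_type]
    exact Finset.sum_congr rfl fun x _ => Finset.sum_mul ..
  rw [h3, Finset.mul_sum, Finset.mul_sum, Finset.mul_sum,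
    ← Finset.sum_add_distrib, ← Finset.sum_add_distrib]
  apply Finset.sum_congr rfl
  intro z _
  have hg : (0:ℝ) < pX z.1 ^ (1 / α) * pYX z.1 z.2 * r z.2 z.1 ^ (1 - 1 / α) :=
    mul_pos (mul_pos (Real.rpow_pos_of_pos (hpX _) _) (hpY _ _))
      (Real.rpow_pos_of_pos (hr _ _) _)
  rw [Real.log_div (hq z).ne' (mul_pos (hqX z.1) (hpY z.1 z.2)).ne',
    Real.log_mul (hqX z.1).ne' (hpY z.1 z.2).ne',
    Real.log_div (hr z.2 z.1).ne' (hqX z.1).ne',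
    Real.log_div (hqX z.1).ne' (hpX z.1).ne',
    Real.log_div (hq z).ne' hg.ne',
    Real.log_mul (mul_pos (Real.rpow_pos_of_pos (hpX _) _) (hpY _ _)).ne'
      (Real.rpow_pos_of_pos (hr _ _) _).ne',
    Real.log_mul (Real.rpow_pos_of_pos (hpX _) _).ne' (hpY _ _).ne',
    Real.log_rpow (hpX _), Real.log_rpow (hr _ _)]
  field_simp
  ring

end Main


/-- Alternating-maximization updating formulae for `F̃_α^{S3}` when `α > 1`:
(1) for fixed `(p_X, q̃_{X,Y})`, the maximizing reverse channel is the posterior of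
`q̃_{X,Y}`; (2) for fixed `(q̃_{X,Y}, r_{X|Y})` with `r` strictly positive, the maximizing
strictly positive `p_X` is the `X`-marginal of `q̃_{X,Y}`; (3) for fixed `(p_X, r_{X|Y})`
with `r` strictly positive, the maximizing strictly positive `q̃_{X,Y}` is
`q̃*(x,y) ∝ p_X(x)^{1/α} p_{Y|X}(y|x) r(x|y)^{1−1/α}`. -/
theorem FtildeS3_max_updates {X Y : Type*} [Fintype X] [Fintype Y] [Nonempty X] [Nonempty Y]
    (α : ℝ) (hα : 1 < α)
    (pYX : X → Y → ℝ) (hpYX : ∀ x, IsPMF (pYX x)) (hpYXpos : ∀ x y, 0 < pYX x y) :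
    (∀ pX : X → ℝ, IsPMF pX → (∀ x, 0 < pX x) →
      ∀ qt : X × Y → ℝ, IsPMF qt → (∀ z, 0 < qt z) →
      ∀ r : Y → X → ℝ, (∀ y, IsPMF (r y)) →
        FtildeS3 α pYX pX qt r ≤
        FtildeS3 α pYX pX qt (fun y x => qt (x, y) / ∑ x', qt (x', y))) ∧
    (∀ qt : X × Y → ℝ, IsPMF qt → (∀ z, 0 < qt z) →
      ∀ r : Y → X → ℝ, (∀ y, IsPMF (r y)) → (∀ y x, 0 < r y x) →
      ∀ pX : X → ℝ, IsPMF pX → (∀ x, 0 < pX x) →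
        FtildeS3 α pYX pX qt r ≤
        FtildeS3 α pYX (fun x => ∑ y, qt (x, y)) qt r) ∧
    (∀ pX : X → ℝ, IsPMF pX → (∀ x, 0 < pX x) →
      ∀ r : Y → X → ℝ, (∀ y, IsPMF (r y)) → (∀ y x, 0 < r y x) →
      ∀ qt : X × Y → ℝ, IsPMF qt → (∀ z, 0 < qt z) →
        FtildeS3 α pYX pX qt r ≤
        FtildeS3 α pYX pX
          (fun z : X × Y =>
            pX z.1 ^ (1 / α) * pYX z.1 z.2 * r z.2 z.1 ^ (1 - 1 / α) /
              ∑ w : X × Y, pX w.1 ^ (1 / α) * pYX w.1 w.2 * r w.2 w.1 ^ (1 - 1 / α)) r) := by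
  refine ⟨?_, ?_, ?_⟩
  · -- Part 1: optimal reverse channel
    intro pX hpX hpXpos qt hqt hqtpos r hr
    by_cases hrpos : ∀ y x, 0 < r y x
    · have hrs : ∀ y x, 0 < qt (x, y) / ∑ x', qt (x', y) := fun y x =>
        div_pos (hqtpos _) (Finset.sum_pos (fun _ _ => hqtpos _) Finset.univ_nonempty)
      rw [FtildeS3_eq_coe α pYX pX qt r hqtpos hrpos,
        FtildeS3_eq_coe α pYX pX qt _ hqtpos hrs]
      exact EReal.coe_le_coe_iff.2 (part1_real α pYX pX qt r hqt hqtpos hr hrpos)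
    · push_neg at hrpos
      obtain ⟨y, x, hle⟩ := hrpos
      have h0 : r y x = 0 := le_antisymm hle ((hr y).1 x)
      rw [FtildeS3_eq_bot α pYX pX qt r hqtpos (x, y) h0]
      exact bot_le
  · -- Part 2: optimal pX is the marginal
    intro qt hqt hqtpos r hr hrpos pX hpX hpXpos
    rw [FtildeS3_eq_coe α pYX pX qt r hqtpos hrpos,
      FtildeS3_eq_coe α pYX _ qt r hqtpos hrpos]
    exact EReal.coe_le_coe_iff.2 (part2_real α hα pYX pX qt r hqt hqtpos hpX hpXpos)
  · -- Part 3: optimal qt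
    intro pX hpX hpXpos r hr hrpos qt hqt hqtpos
    have hgpos : ∀ z : X × Y, 0 < pX z.1 ^ (1 / α) * pYX z.1 z.2 * r z.2 z.1 ^ (1 - 1 / α) :=
      fun z => mul_pos (mul_pos (Real.rpow_pos_of_pos (hpXpos _) _) (hpYXpos _ _))
        (Real.rpow_pos_of_pos (hrpos _ _) _)
    set S : ℝ := ∑ w : X × Y, pX w.1 ^ (1 / α) * pYX w.1 w.2 * r w.2 w.1 ^ (1 - 1 / α)
      with hS_def
    have hS : 0 < S := Finset.sum_pos (fun w _ => hgpos w) Finset.univ_nonempty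
    set qs : X × Y → ℝ :=
      fun z => pX z.1 ^ (1 / α) * pYX z.1 z.2 * r z.2 z.1 ^ (1 - 1 / α) / S with hqs_def
    have hqs_apply : ∀ z : X × Y,
        qs z = pX z.1 ^ (1 / α) * pYX z.1 z.2 * r z.2 z.1 ^ (1 - 1 / α) / S := fun z => rfl
    have hqspos : ∀ z, 0 < qs z := fun z => div_pos (hgpos z) hS
    have hqs1 : ∑ z, qs z = 1 := by
      rw [Finset.sum_congr rfl fun z _ => hqs_apply z, ← Finset.sum_div, ← hS_def,
        div_self hS.ne']
    rw [FtildeS3_eq_coe α pYX pX qt r hqtpos hrpos,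
      FtildeS3_eq_coe α pYX pX qs r hqspos hrpos]
    apply EReal.coe_le_coe_iff.2
    rw [Freal_repr α hα pYX pX qt r hpYXpos hpXpos hrpos hqtpos,
      Freal_repr α hα pYX pX qs r hpYXpos hpXpos hrpos hqspos]
    have hc : α / (1 - α) < 0 := div_neg_of_pos_of_neg (by linarith) (by linarith)
    have hD : 0 ≤ ∑ z : X × Y, qt z * Real.log (qt z / qs z) :=
      gibbs_ineq _ _ (fun z => (hqtpos z).le) hqt.2 hqspos (le_of_eq hqs1)
    have h1 : ∑ z : X × Y, qt z * Real.log
        (qt z / (pX z.1 ^ (1 / α) * pYX z.1 z.2 * r z.2 z.1 ^ (1 - 1 / α)))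
        = (∑ z : X × Y, qt z * Real.log (qt z / qs z)) - Real.log S := by
      have hpt : ∀ z : X × Y, qt z * Real.log
          (qt z / (pX z.1 ^ (1 / α) * pYX z.1 z.2 * r z.2 z.1 ^ (1 - 1 / α)))
          = qt z * Real.log (qt z / qs z) - qt z * Real.log S := by
        intro z
        have hratio : qt z / (pX z.1 ^ (1 / α) * pYX z.1 z.2 * r z.2 z.1 ^ (1 - 1 / α))
            = (qt z / qs z) / S := by
          rw [hqs_apply z, div_div, div_mul_cancel₀ _ hS.ne']
        rw [hratio, Real.log_div (div_pos (hqtpos z) (hqspos z)).ne' hS.ne']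
        ring
      rw [Finset.sum_congr rfl fun z _ => hpt z, Finset.sum_sub_distrib, ← Finset.sum_mul,
        hqt.2, one_mul]
    have h2 : ∑ z : X × Y, qs z * Real.log
        (qs z / (pX z.1 ^ (1 / α) * pYX z.1 z.2 * r z.2 z.1 ^ (1 - 1 / α)))
        = -Real.log S := by
      have hpt : ∀ z : X × Y, qs z * Real.log
          (qs z / (pX z.1 ^ (1 / α) * pYX z.1 z.2 * r z.2 z.1 ^ (1 - 1 / α)))
          = qs z * (-Real.log S) := by
        intro z
        have hratio : qs z / (pX z.1 ^ (1 / α) * pYX z.1 z.2 * r z.2 z.1 ^ (1 - 1 / α))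
            = S⁻¹ := by
          rw [hqs_apply z, div_right_comm, div_self (hgpos z).ne', one_div]
        rw [hratio, Real.log_inv]
      rw [Finset.sum_congr rfl fun z _ => hpt z, ← Finset.sum_mul, hqs1, one_mul]
    rw [h1, h2]
    nlinarith [mul_nonpos_of_nonpos_of_nonneg hc.le hD]
end
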